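/- Let X,Y be topological left unosemigroups with left unit operations λ_X, λ_Y, and I⊆X a closed two-sided ideal with λ_X(I)⊆I. If (X,λ_X) and (Y,λ_Y) are ditopological, then the reduced product X×_I Y, with its natural left unit operation λ, is a ditopological left unosemigroup. -/

import Mathlib

open Topology

/-- Dicontinuity of a left unit operation `l` at `x`:
for every neighborhood `O` of `x` there are a neighborhood `U` of `x` and a
neighborhood `W` of `l x` in the subspace `l(S)` such that
`(W ⟍ U) ∩ l⁻¹(W) ⊆ O`, where `W ⟍ U = {z | ∃ w ∈ W, w * z ∈ U}`. -/
def LeftDicontAt {S : Type*} [TopologicalSpace S] (mul : S → S → S) (l : S → S) (x : S) : Prop :=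
  ∀ O ∈ 𝓝 x, ∃ U ∈ 𝓝 x, ∃ W ∈ 𝓝[Set.range l] (l x),
    W ⊆ Set.range l ∧ {z | l z ∈ W ∧ ∃ w ∈ W, mul w z ∈ U} ⊆ O

/-- Dicontinuity of a right unit operation `r` at `x`. -/
def RightDicontAt {S : Type*} [TopologicalSpace S] (mul : S → S → S) (r : S → S) (x : S) : Prop :=
  ∀ O ∈ 𝓝 x, ∃ U ∈ 𝓝 x, ∃ W ∈ 𝓝[Set.range r] (r x),
    W ⊆ Set.range r ∧ {z | r z ∈ W ∧ ∃ w ∈ W, mul z w ∈ U} ⊆ O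

/-- The equivalence relation on `X × Y` identifying `(x, y)` and `(x, y')` for `x ∈ I`:
the quotient is the reduced product `X ×_I Y = I ∪ ((X \ I) × Y)`. -/
def rpSetoid {X Y : Type*} (I : Set X) : Setoid (X × Y) where
  r p q := p.1 = q.1 ∧ (p.1 ∈ I ∨ p.2 = q.2)
  iseqv := by
    constructor
    · exact fun p => ⟨rfl, Or.inr rfl⟩
    · rintro p q ⟨h1, h2⟩
      refine ⟨h1.symm, ?_⟩
      rcases h2 with h | h
      · exact Or.inl (h1 ▸ h)
      · exact Or.inr h.symm
    · rintro p q r ⟨h1, h2⟩ ⟨h3, h4⟩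
      refine ⟨h1.trans h3, ?_⟩
      rcases h2 with h | h
      · exact Or.inl h
      · rcases h4 with h' | h'
        · exact Or.inl (h1.symm ▸ h')
        · exact Or.inr (h.trans h')

/-- The underlying set of the reduced product `X ×_I Y`. -/
def RP {X : Type*} (Y : Type*) (I : Set X) := Quotient (rpSetoid (X := X) (Y := Y) I)

/-- The canonical projection `q : X × Y → X ×_I Y`. -/
def rpMk {X Y : Type*} (I : Set X) (p : X × Y) : RP Y I :=
  Quotient.mk (rpSetoid I) p

/-- The projection `π : X ×_I Y → X`. -/
def rpPi {X Y : Type*} (I : Set X) : RP Y I → X :=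
  Quotient.lift Prod.fst (fun _ _ h => h.1)

/-- The multiplication of the reduced product `X ×_I Y` (the unique one making
`q : X × Y → X ×_I Y` a homomorphism). -/
def rpMul {X Y : Type*} [Mul X] [Mul Y] (I : Set X)
    (hI : ∀ a b : X, a ∈ I ∨ b ∈ I → a * b ∈ I) :
    RP Y I → RP Y I → RP Y I :=
  Quotient.lift₂ (fun p q => rpMk I (p.1 * q.1, p.2 * q.2)) (by
    rintro p q p' q' ⟨h1, h2⟩ ⟨h3, h4⟩
    refine Quotient.sound ⟨by rw [h1, h3], ?_⟩
    by_cases hmem : p.1 * q.1 ∈ I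
    · exact Or.inl hmem
    · refine Or.inr ?_
      have hp2 : p.2 = p'.2 := by
        rcases h2 with h | h
        · exact absurd (hI _ _ (Or.inl h)) hmem
        · exact h
      have hq2 : q.2 = q'.2 := by
        rcases h4 with h | h
        · exact absurd (hI _ _ (Or.inr h)) hmem
        · exact h
      rw [hp2, hq2])

/-- The natural left unit operation on the reduced product `X ×_I Y`. -/
def rpL {X Y : Type*} (I : Set X) (lX : X → X) (lY : Y → Y)
    (hlI : ∀ x ∈ I, lX x ∈ I) : RP Y I → RP Y I :=
  Quotient.lift (fun p => rpMk I (lX p.1, lY p.2)) (by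
    rintro p q ⟨h1, h2⟩
    refine Quotient.sound ⟨by rw [h1], ?_⟩
    rcases h2 with h | h
    · exact Or.inl (hlI _ h)
    · exact Or.inr (by rw [h]))

/-- The topology of the reduced product: the smallest topology making the inclusion
`(X \ I) × Y ↪ X ×_I Y` a topological embedding and the projection `π` continuous,
i.e. the topology generated by images of open boxes `U × V` with `U ⊆ X \ I`
together with preimages `π⁻¹(O)` of open sets. -/
def rpTop {X Y : Type*} [TopologicalSpace X] [TopologicalSpace Y] (I : Set X) :
    TopologicalSpace (RP Y I) :=
  TopologicalSpace.generateFrom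
    ({Z | ∃ (U : Set X) (V : Set Y), IsOpen U ∧ U ⊆ Iᶜ ∧ IsOpen V ∧
        Z = rpMk I '' (U ×ˢ V)} ∪
     {Z | ∃ O : Set X, IsOpen O ∧ Z = rpPi I ⁻¹' O})

section Aux

variable {X Y : Type*} [TopologicalSpace X] [TopologicalSpace Y] {I : Set X}

omit [TopologicalSpace X] [TopologicalSpace Y] in
lemma rpMk_eq_iff' {p q : X × Y} :
    rpMk I p = rpMk I q ↔ (p.1 = q.1 ∧ (p.1 ∈ I ∨ p.2 = q.2)) :=
  ⟨fun h => Quotient.exact h, fun h => Quotient.sound h⟩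

omit [TopologicalSpace X] [TopologicalSpace Y] in
lemma rp_mem_box {x : X} {y : Y} {U : Set X} {V : Set Y} (hU : U ⊆ Iᶜ) :
    rpMk I (x, y) ∈ rpMk I '' (U ×ˢ V) ↔ x ∈ U ∧ y ∈ V := by
  constructor
  · rintro ⟨⟨u, v⟩, ⟨hu, hv⟩, heq⟩
    obtain ⟨h1, h2⟩ := rpMk_eq_iff'.mp heq
    have h1' : u = x := h1
    rcases h2 with h | h
    · exact absurd h (hU hu)
    · have h' : v = y := h
      exact ⟨h1' ▸ hu, h' ▸ hv⟩
  · rintro ⟨hx, hy⟩; exact ⟨(x, y), ⟨hx, hy⟩, rfl⟩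

lemma rp_isOpen_pre {O : Set X} (hO : IsOpen O) :
    @IsOpen (RP Y I) (rpTop I) (rpPi I ⁻¹' O) :=
  TopologicalSpace.isOpen_generateFrom_of_mem (Or.inr ⟨O, hO, rfl⟩)

lemma rp_isOpen_box {U : Set X} {V : Set Y} (hU : IsOpen U) (hUI : U ⊆ Iᶜ)
    (hV : IsOpen V) : @IsOpen (RP Y I) (rpTop I) (rpMk I '' (U ×ˢ V)) :=
  TopologicalSpace.isOpen_generateFrom_of_mem (Or.inl ⟨U, V, hU, hUI, hV, rfl⟩)

lemma rp_nhd_of_mem {G : Set (RP Y I)} (hG : @IsOpen (RP Y I) (rpTop I) G)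
    {x : X} {y : Y} (hx : x ∈ I) (hz : rpMk I (x, y) ∈ G) :
    ∃ O : Set X, IsOpen O ∧ x ∈ O ∧ rpPi I ⁻¹' O ⊆ G := by
  have hG' : TopologicalSpace.GenerateOpen
      ({Z | ∃ (U : Set X) (V : Set Y), IsOpen U ∧ U ⊆ Iᶜ ∧ IsOpen V ∧
          Z = rpMk I '' (U ×ˢ V)} ∪
       {Z | ∃ O : Set X, IsOpen O ∧ Z = rpPi I ⁻¹' O}) G := hG
  clear hG
  revert hz
  induction hG' with
  | basic s hs =>
    intro hz
    rcases hs with ⟨U, V, hU, hUI, hV, rfl⟩ | ⟨O, hO, rfl⟩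
    · exact absurd hx (hUI ((rp_mem_box hUI).mp hz).1)
    · exact ⟨O, hO, hz, subset_rfl⟩
  | univ => exact fun _ => ⟨Set.univ, isOpen_univ, trivial, fun _ _ => trivial⟩
  | inter s t _ _ ihs iht =>
    intro hz
    obtain ⟨O1, h1, hx1, hs1⟩ := ihs hz.1
    obtain ⟨O2, h2, hx2, hs2⟩ := iht hz.2
    exact ⟨O1 ∩ O2, h1.inter h2, ⟨hx1, hx2⟩, fun a ha => ⟨hs1 ha.1, hs2 ha.2⟩⟩
  | sUnion S hS ih =>
    rintro ⟨s, hsS, hzs⟩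
    obtain ⟨O, hO, hxO, hsub⟩ := ih s hsS hzs
    exact ⟨O, hO, hxO, fun a ha => ⟨s, hsS, hsub ha⟩⟩

lemma rp_nhd_of_not_mem (hIc : IsOpen Iᶜ) {G : Set (RP Y I)}
    (hG : @IsOpen (RP Y I) (rpTop I) G)
    {x : X} {y : Y} (hx : x ∉ I) (hz : rpMk I (x, y) ∈ G) :
    ∃ (U : Set X) (V : Set Y), IsOpen U ∧ U ⊆ Iᶜ ∧ x ∈ U ∧ IsOpen V ∧ y ∈ V ∧
      rpMk I '' (U ×ˢ V) ⊆ G := by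
  have hG' : TopologicalSpace.GenerateOpen
      ({Z | ∃ (U : Set X) (V : Set Y), IsOpen U ∧ U ⊆ Iᶜ ∧ IsOpen V ∧
          Z = rpMk I '' (U ×ˢ V)} ∪
       {Z | ∃ O : Set X, IsOpen O ∧ Z = rpPi I ⁻¹' O}) G := hG
  clear hG
  revert hz
  induction hG' with
  | basic s hs =>
    intro hz
    rcases hs with ⟨U, V, hU, hUI, hV, rfl⟩ | ⟨O, hO, rfl⟩
    · obtain ⟨hxU, hyV⟩ := (rp_mem_box hUI).mp hz
      exact ⟨U, V, hU, hUI, hxU, hV, hyV, subset_rfl⟩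
    · refine ⟨O ∩ Iᶜ, Set.univ, hO.inter hIc, Set.inter_subset_right, ⟨hz, hx⟩,
        isOpen_univ, trivial, ?_⟩
      rintro _ ⟨⟨u, v⟩, ⟨⟨hu, _⟩, _⟩, rfl⟩
      exact hu
  | univ =>
    exact fun _ => ⟨Iᶜ, Set.univ, hIc, subset_rfl, hx, isOpen_univ, trivial,
      fun _ _ => trivial⟩
  | inter s t _ _ ihs iht =>
    intro hz
    obtain ⟨U1, V1, hU1, hUI1, hx1, hV1, hy1, hs1⟩ := ihs hz.1
    obtain ⟨U2, V2, hU2, hUI2, hx2, hV2, hy2, hs2⟩ := iht hz.2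
    refine ⟨U1 ∩ U2, V1 ∩ V2, hU1.inter hU2, fun a ha => hUI1 ha.1, ⟨hx1, hx2⟩,
      hV1.inter hV2, ⟨hy1, hy2⟩, fun a ha => ⟨?_, ?_⟩⟩
    · exact hs1 (Set.image_mono (Set.prod_mono Set.inter_subset_left
        Set.inter_subset_left) ha)
    · exact hs2 (Set.image_mono (Set.prod_mono Set.inter_subset_right
        Set.inter_subset_right) ha)
  | sUnion S hS ih =>
    rintro ⟨s, hsS, hzs⟩
    obtain ⟨U, V, hU, hUI, hxU, hV, hyV, hsub⟩ := ih s hsS hzs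
    exact ⟨U, V, hU, hUI, hxU, hV, hyV, fun a ha => ⟨s, hsS, hsub ha⟩⟩

end Aux

/-- The reduced product of ditopological left unosemigroups over a closed two-sided
ideal is a ditopological left unosemigroup. -/
theorem reduced_product_ditopological {X Y : Type*} [TopologicalSpace X] [TopologicalSpace Y]
    [Mul X] [Mul Y]
    (hassocX : ∀ a b c : X, a * b * c = a * (b * c))
    (hassocY : ∀ a b c : Y, a * b * c = a * (b * c))
    (hmulX : Continuous fun p : X × X => p.1 * p.2)
    (hmulY : Continuous fun p : Y × Y => p.1 * p.2)
    (lX : X → X) (hlX : Continuous lX) (hunitX : ∀ x : X, lX x * x = x)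
    (lY : Y → Y) (hlY : Continuous lY) (hunitY : ∀ y : Y, lY y * y = y)
    (hdiX : ∀ x : X, LeftDicontAt (· * ·) lX x)
    (hdiY : ∀ y : Y, LeftDicontAt (· * ·) lY y)
    (I : Set X) (hIclosed : IsClosed I)
    (hI : ∀ a b : X, a ∈ I ∨ b ∈ I → a * b ∈ I)
    (hlI : ∀ x ∈ I, lX x ∈ I) :
    ∀ z : RP Y I, @LeftDicontAt (RP Y I) (rpTop I) (rpMul I hI) (rpL I lX lY hlI) z := by
  letI : TopologicalSpace (RP Y I) := rpTop I
  have hIc : IsOpen Iᶜ := hIclosed.isOpen_compl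
  set L : RP Y I → RP Y I := rpL I lX lY hlI with hLdef
  have hrep : ∀ z : RP Y I, ∃ p : X × Y, z = rpMk I p := by
    intro z
    obtain ⟨p, hp⟩ := Quotient.exists_rep z
    exact ⟨p, hp.symm⟩
  have hL_mk : ∀ p : X × Y, L (rpMk I p) = rpMk I (lX p.1, lY p.2) := fun _ => rfl
  have hPi_mk : ∀ p : X × Y, rpPi I (rpMk I p) = p.1 := fun _ => rfl
  have hMul_mk : ∀ p q : X × Y,
      rpMul I hI (rpMk I p) (rpMk I q) = rpMk I (p.1 * q.1, p.2 * q.2) := fun _ _ => rfl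
  intro z O hO
  obtain ⟨⟨x, y⟩, rfl⟩ := hrep z
  obtain ⟨G, hGO, hGopen, hzG⟩ := mem_nhds_iff.mp hO
  by_cases hxI : x ∈ I
  · -- the point lies in the ideal part
    obtain ⟨O₀, hO₀, hxO₀, hsubG⟩ := rp_nhd_of_mem hGopen hxI hzG
    obtain ⟨U₁, hU₁, W₁, hW₁, hW₁r, hkey⟩ := hdiX x O₀ (hO₀.mem_nhds hxO₀)
    obtain ⟨T, hTopen, hlxT, hTsub⟩ := mem_nhdsWithin.mp hW₁
    refine ⟨rpPi I ⁻¹' U₁, ?_, rpPi I ⁻¹' T ∩ Set.range L, ?_, Set.inter_subset_right, ?_⟩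
    · obtain ⟨O₁, hO₁sub, hO₁open, hxO₁⟩ := mem_nhds_iff.mp hU₁
      exact mem_nhds_iff.mpr ⟨rpPi I ⁻¹' O₁, Set.preimage_mono hO₁sub,
        rp_isOpen_pre hO₁open, hxO₁⟩
    · refine mem_nhdsWithin.mpr ⟨rpPi I ⁻¹' T, rp_isOpen_pre hTopen, ?_, subset_rfl⟩
      show rpPi I (L (rpMk I (x, y))) ∈ T
      rw [hL_mk, hPi_mk]
      exact hlxT
    · rintro z' ⟨hLz', w, hwW, hmul⟩
      obtain ⟨⟨a, b⟩, rfl⟩ := hrep z'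
      obtain ⟨wz, hwz⟩ := hwW.2
      obtain ⟨⟨c, d⟩, rfl⟩ := hrep wz
      have hw : w = rpMk I (lX c, lY d) := by rw [← hwz, hL_mk]
      have hlaW₁ : lX a ∈ W₁ := by
        refine hTsub ⟨?_, ⟨a, rfl⟩⟩
        have := hLz'
        rw [hL_mk] at this
        exact this.1
      have hlcW₁ : lX c ∈ W₁ := by
        refine hTsub ⟨?_, ⟨c, rfl⟩⟩
        have := hwW.1
        rw [hw] at this
        exact this
      have hmul' : lX c * a ∈ U₁ := by
        rw [hw, hMul_mk] at hmul
        exact hmul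
      have haO₀ : a ∈ O₀ := hkey ⟨hlaW₁, lX c, hlcW₁, hmul'⟩
      exact hGO (hsubG haO₀)
  · -- the point lies outside the ideal
    have hlxI : lX x ∉ I := fun h => hxI (hunitX x ▸ hI _ _ (Or.inl h))
    obtain ⟨U₀, V₀, hU₀, hU₀I, hxU₀, hV₀, hyV₀, hsubG⟩ :=
      rp_nhd_of_not_mem hIc hGopen hxI hzG
    obtain ⟨U₁, hU₁, W₁, hW₁, hW₁r, hkeyX⟩ := hdiX x U₀ (hU₀.mem_nhds hxU₀)
    obtain ⟨V₁, hV₁, W₂, hW₂, hW₂r, hkeyY⟩ := hdiY y V₀ (hV₀.mem_nhds hyV₀)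
    obtain ⟨U₁', hU₁'sub, hU₁'open, hxU₁'⟩ :=
      mem_nhds_iff.mp (Filter.inter_mem hU₁ (hIc.mem_nhds hxI))
    obtain ⟨V₁', hV₁'sub, hV₁'open, hyV₁'⟩ := mem_nhds_iff.mp hV₁
    obtain ⟨T₁, hT₁open, hlxT₁, hT₁sub⟩ := mem_nhdsWithin.mp hW₁
    obtain ⟨T₂, hT₂open, hlyT₂, hT₂sub⟩ := mem_nhdsWithin.mp hW₂
    have hU₁'I : U₁' ⊆ Iᶜ := fun a ha => (hU₁'sub ha).2
    have hT₁'I : T₁ ∩ Iᶜ ⊆ Iᶜ := Set.inter_subset_right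
    refine ⟨rpMk I '' (U₁' ×ˢ V₁'), ?_,
      rpMk I '' ((T₁ ∩ Iᶜ) ×ˢ T₂) ∩ Set.range L, ?_, Set.inter_subset_right, ?_⟩
    · exact (rp_isOpen_box hU₁'open hU₁'I hV₁'open).mem_nhds
        ((rp_mem_box hU₁'I).mpr ⟨hxU₁', hyV₁'⟩)
    · refine mem_nhdsWithin.mpr ⟨rpMk I '' ((T₁ ∩ Iᶜ) ×ˢ T₂),
        rp_isOpen_box (hT₁open.inter hIc) hT₁'I hT₂open, ?_, subset_rfl⟩
      show L (rpMk I (x, y)) ∈ _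
      rw [hL_mk]
      exact (rp_mem_box hT₁'I).mpr ⟨⟨hlxT₁, hlxI⟩, hlyT₂⟩
    · rintro z' ⟨hLz', w, hwW, hmul⟩
      obtain ⟨⟨a, b⟩, rfl⟩ := hrep z'
      obtain ⟨wz, hwz⟩ := hwW.2
      obtain ⟨⟨c, d⟩, rfl⟩ := hrep wz
      have hw : w = rpMk I (lX c, lY d) := by rw [← hwz, hL_mk]
      have hLz'' : rpMk I (lX a, lY b) ∈ rpMk I '' ((T₁ ∩ Iᶜ) ×ˢ T₂) := by
        have := hLz'.1
        exact this
      obtain ⟨hlaT₁, hlbT₂⟩ := (rp_mem_box hT₁'I).mp hLz''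
      have hwbox : rpMk I (lX c, lY d) ∈ rpMk I '' ((T₁ ∩ Iᶜ) ×ˢ T₂) := hw ▸ hwW.1
      obtain ⟨hlcT₁, hldT₂⟩ := (rp_mem_box hT₁'I).mp hwbox
      have hmul' : rpMk I (lX c * a, lY d * b) ∈ rpMk I '' (U₁' ×ˢ V₁') := by
        rw [hw, hMul_mk] at hmul
        exact hmul
      obtain ⟨hca, hdb⟩ := (rp_mem_box hU₁'I).mp hmul'
      have hlaW₁ : lX a ∈ W₁ := hT₁sub ⟨hlaT₁.1, ⟨a, rfl⟩⟩
      have hlcW₁ : lX c ∈ W₁ := hT₁sub ⟨hlcT₁.1, ⟨c, rfl⟩⟩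
      have hlbW₂ : lY b ∈ W₂ := hT₂sub ⟨hlbT₂, ⟨b, rfl⟩⟩
      have hldW₂ : lY d ∈ W₂ := hT₂sub ⟨hldT₂, ⟨d, rfl⟩⟩
      have haU₀ : a ∈ U₀ := hkeyX ⟨hlaW₁, lX c, hlcW₁, (hU₁'sub hca).1⟩
      have hbV₀ : b ∈ V₀ := hkeyY ⟨hlbW₂, lY d, hldW₂, hV₁'sub hdb⟩
      exact hGO (hsubG ⟨(a, b), ⟨haU₀, hbV₀⟩, rfl⟩)
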